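/- arXiv:2101.03313 — 4 statements merged into one kernel-verified Lean document; each statement's English description precedes it below -/
import Mathlib

section
/- Define Î(s) = ∫₀¹ dξ/√((1-ξ³)/3 - s(1-ξ⁴)/4) for s ∈ (0,1). Then Î'(s) > 0 and Î''(s) > 0 for all s ∈ (0,1). -/
open intervalIntegral MeasureTheory Set Real
open scoped Interval

noncomputable def Ihat : ℝ → ℝ :=
  fun s => ∫ ξ in (0:ℝ)..1, 1 / Real.sqrt ((1 - ξ^3)/3 - s * (1 - ξ^4)/4)

noncomputable def gg (s ξ : ℝ) : ℝ := (1 - ξ^3)/3 - s * (1 - ξ^4)/4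

noncomputable def FF1 (s ξ : ℝ) : ℝ := (1 - ξ^4) / (8 * Real.sqrt (gg s ξ) * gg s ξ)

noncomputable def FF2 (s ξ : ℝ) : ℝ :=
  3 * (1 - ξ^4)^2 / (64 * Real.sqrt (gg s ξ) * (gg s ξ)^2)

lemma gg_lb {σ s ξ : ℝ} (hsσ : s ≤ σ) (hσ : σ ≤ 1) (h0 : 0 ≤ ξ) (h1 : ξ ≤ 1) :
    (1 - σ) * (1 - ξ) / 4 ≤ gg s ξ := by
  have hξ2 : ξ^2 ≤ 1 := by nlinarith
  have hξ3 : ξ^3 ≤ ξ := by nlinarith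
  have hξ4 : ξ^4 ≤ ξ := by nlinarith
  have h4 : (0:ℝ) ≤ 1 - ξ^4 := by nlinarith
  have hmono : gg σ ξ ≤ gg s ξ := by unfold gg; nlinarith
  have key : (1 - σ) * (1 - ξ) / 4 ≤ gg σ ξ := by
    unfold gg
    nlinarith [sq_nonneg (1 - ξ), mul_nonneg (sub_nonneg.2 hσ) (sub_nonneg.2 hξ4),
      mul_nonneg (mul_nonneg (sub_nonneg.2 h1) (sub_nonneg.2 h1)) (sq_nonneg ξ)]
  linarith

lemma gg_pos {σ s ξ : ℝ} (hsσ : s ≤ σ) (hσ : σ < 1) (h0 : 0 ≤ ξ) (h1 : ξ < 1) :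
    0 < gg s ξ := by
  have := gg_lb hsσ hσ.le h0 h1.le
  nlinarith

lemma gg_hasDeriv (ξ x : ℝ) : HasDerivAt (fun s => gg s ξ) (-((1 - ξ^4)/4)) x := by
  have h1 : HasDerivAt (fun s : ℝ => s * (1 - ξ^4) / 4) ((1 - ξ^4)/4) x := by
    simpa [mul_div_assoc] using (hasDerivAt_id x).mul_const ((1 - ξ^4)/4)
  have h2 := (hasDerivAt_const x ((1 - ξ^3)/3)).sub h1
  rw [zero_sub] at h2
  exact h2

lemma F_hasDeriv (ξ x : ℝ) (h : 0 < gg x ξ) :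
    HasDerivAt (fun s => 1 / Real.sqrt (gg s ξ)) (FF1 x ξ) x := by
  have hne : gg x ξ ≠ 0 := ne_of_gt h
  have hsp : 0 < Real.sqrt (gg x ξ) := Real.sqrt_pos.2 h
  have hsne : Real.sqrt (gg x ξ) ≠ 0 := ne_of_gt hsp
  have hs := (gg_hasDeriv ξ x).sqrt hne
  have hi := hs.inv hsne
  have heq : -(-((1 - ξ^4)/4) / (2 * Real.sqrt (gg x ξ))) / Real.sqrt (gg x ξ) ^ 2
      = FF1 x ξ := by
    obtain ⟨r, hr, hrg⟩ : ∃ r : ℝ, 0 < r ∧ gg x ξ = r ^ 2 :=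
      ⟨Real.sqrt (gg x ξ), hsp, (Real.sq_sqrt h.le).symm⟩
    have hrr : Real.sqrt (gg x ξ) = r := by rw [hrg, Real.sqrt_sq hr.le]
    rw [FF1, hrr, hrg]
    field_simp [hr.ne']
    first
    | ring1
    | (left; ring1)
  rw [heq] at hi
  simp only [one_div]
  exact hi

lemma FF1_hasDeriv (ξ x : ℝ) (h : 0 < gg x ξ) :
    HasDerivAt (fun s => FF1 s ξ) (FF2 x ξ) x := by
  have hne : gg x ξ ≠ 0 := ne_of_gt h
  have hsp : 0 < Real.sqrt (gg x ξ) := Real.sqrt_pos.2 h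
  have hsne : Real.sqrt (gg x ξ) ≠ 0 := ne_of_gt hsp
  have hs := (gg_hasDeriv ξ x).sqrt hne
  have hD : HasDerivAt (fun s => 8 * Real.sqrt (gg s ξ) * gg s ξ)
      (8 * (-((1 - ξ^4)/4) / (2 * Real.sqrt (gg x ξ))) * gg x ξ
        + 8 * Real.sqrt (gg x ξ) * -((1 - ξ^4)/4)) x :=
    (hs.const_mul 8).mul (gg_hasDeriv ξ x)
  have hDne : 8 * Real.sqrt (gg x ξ) * gg x ξ ≠ 0 := by positivity
  have hi := (hD.inv hDne).const_mul (1 - ξ^4)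
  have heq : (1 - ξ^4) * (-(8 * (-((1 - ξ^4)/4) / (2 * Real.sqrt (gg x ξ))) * gg x ξ
        + 8 * Real.sqrt (gg x ξ) * -((1 - ξ^4)/4)) / (8 * Real.sqrt (gg x ξ) * gg x ξ) ^ 2)
      = FF2 x ξ := by
    obtain ⟨r, hr, hrg⟩ : ∃ r : ℝ, 0 < r ∧ gg x ξ = r ^ 2 :=
      ⟨Real.sqrt (gg x ξ), hsp, (Real.sq_sqrt h.le).symm⟩
    have hrr : Real.sqrt (gg x ξ) = r := by rw [hrg, Real.sqrt_sq hr.le]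
    rw [FF2, hrr, hrg]
    field_simp [hr.ne']
    first
    | ring1
    | (left; ring1)
  rw [heq] at hi
  have hfun : (fun s => FF1 s ξ) = fun s => (1 - ξ^4) * (8 * Real.sqrt (gg s ξ) * gg s ξ)⁻¹ := by
    funext s; rw [FF1, div_eq_mul_inv]
  rw [hfun]
  exact hi

lemma rpow_half_eq {t : ℝ} (h0 : 0 ≤ t) : t ^ (-(1/2) : ℝ) = (Real.sqrt t)⁻¹ := by
  rw [Real.rpow_neg h0, ← Real.sqrt_eq_rpow]

lemma bound_int (K : ℝ) :
    IntervalIntegrable (fun t : ℝ => K * (1 - t) ^ (-(1/2) : ℝ)) volume 0 1 := by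
  have h : IntervalIntegrable (fun t : ℝ => t ^ (-(1/2) : ℝ)) volume 0 1 :=
    intervalIntegral.intervalIntegrable_rpow' (by norm_num)
  have h3 : IntervalIntegrable (fun x : ℝ => (1 - x) ^ (-(1/2) : ℝ)) volume 0 1 := by
    simpa using (h.comp_sub_left 1).symm
  exact h3.const_mul K

lemma abs_F_le {σ x t : ℝ} (hx : x ≤ σ) (hσ : σ < 1) (ht : t ∈ Set.Ioo (0:ℝ) 1) :
    ‖1 / Real.sqrt (gg x t)‖ ≤
      (Real.sqrt ((1 - σ)/4))⁻¹ * (1 - t) ^ (-(1/2) : ℝ) := by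
  set c : ℝ := (1 - σ)/4 with hc
  have hcpos : 0 < c := by simp only [hc]; linarith
  have hu : 0 < 1 - t := by linarith [ht.2]
  have hg : c * (1 - t) ≤ gg x t := by
    have := gg_lb hx hσ.le ht.1.le ht.2.le
    calc c * (1 - t) = (1 - σ) * (1 - t) / 4 := by rw [hc]; ring
    _ ≤ gg x t := this
  have hcu : 0 < c * (1 - t) := mul_pos hcpos hu
  have hgpos : 0 < gg x t := lt_of_lt_of_le hcu hg
  have hsqle : Real.sqrt c * Real.sqrt (1 - t) ≤ Real.sqrt (gg x t) := by
    rw [← Real.sqrt_mul hcpos.le]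
    exact Real.sqrt_le_sqrt hg
  have hsqpos : 0 < Real.sqrt c * Real.sqrt (1 - t) :=
    mul_pos (Real.sqrt_pos.2 hcpos) (Real.sqrt_pos.2 hu)
  rw [rpow_half_eq hu.le]
  rw [Real.norm_eq_abs, abs_of_nonneg (by positivity)]
  rw [one_div]
  calc (Real.sqrt (gg x t))⁻¹ ≤ (Real.sqrt c * Real.sqrt (1 - t))⁻¹ :=
        inv_anti₀ hsqpos hsqle
    _ = (Real.sqrt c)⁻¹ * (Real.sqrt (1 - t))⁻¹ := by rw [mul_inv]

lemma abs_FF1_le {σ x t : ℝ} (hx : x ≤ σ) (hσ : σ < 1) (ht : t ∈ Set.Ioo (0:ℝ) 1) :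
    ‖FF1 x t‖ ≤
      (1 / (2 * ((1 - σ)/4) * Real.sqrt ((1 - σ)/4))) * (1 - t) ^ (-(1/2) : ℝ) := by
  set c : ℝ := (1 - σ)/4 with hc
  have hcpos : 0 < c := by simp only [hc]; linarith
  have hu : 0 < 1 - t := by linarith [ht.2]
  have hg : c * (1 - t) ≤ gg x t := by
    have := gg_lb hx hσ.le ht.1.le ht.2.le
    calc c * (1 - t) = (1 - σ) * (1 - t) / 4 := by rw [hc]; ring
    _ ≤ gg x t := this
  have hcu : 0 < c * (1 - t) := mul_pos hcpos hu
  have hgpos : 0 < gg x t := lt_of_lt_of_le hcu hg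
  have hsqle : Real.sqrt c * Real.sqrt (1 - t) ≤ Real.sqrt (gg x t) := by
    rw [← Real.sqrt_mul hcpos.le]
    exact Real.sqrt_le_sqrt hg
  have hsc : 0 < Real.sqrt c := Real.sqrt_pos.2 hcpos
  have hsu : 0 < Real.sqrt (1 - t) := Real.sqrt_pos.2 hu
  have hsg : 0 < Real.sqrt (gg x t) := Real.sqrt_pos.2 hgpos
  have hnum : 1 - t^4 ≤ 4 * (1 - t) := by nlinarith [ht.1, ht.2, sq_nonneg t, sq_nonneg (1 - t)]
  have ht2 : t^2 ≤ 1 := by nlinarith [ht.1, ht.2]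
  have hnum0 : 0 ≤ 1 - t^4 := by nlinarith [ht2, sq_nonneg t]
  have hFnn : 0 ≤ FF1 x t := by
    rw [FF1]; positivity
  rw [Real.norm_eq_abs, abs_of_nonneg hFnn, FF1]
  have hden : 8 * (Real.sqrt c * Real.sqrt (1 - t)) * (c * (1 - t))
      ≤ 8 * Real.sqrt (gg x t) * gg x t := by
    have h1 : 8 * (Real.sqrt c * Real.sqrt (1 - t)) ≤ 8 * Real.sqrt (gg x t) := by linarith
    exact mul_le_mul h1 hg hcu.le (by positivity)
  have hdpos : 0 < 8 * (Real.sqrt c * Real.sqrt (1 - t)) * (c * (1 - t)) := by positivity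
  calc (1 - t^4) / (8 * Real.sqrt (gg x t) * gg x t)
      ≤ (4 * (1 - t)) / (8 * (Real.sqrt c * Real.sqrt (1 - t)) * (c * (1 - t))) :=
        div_le_div₀ (by linarith) hnum hdpos hden
    _ = (1 / (2 * c * Real.sqrt c)) * (1 - t) ^ (-(1/2) : ℝ) := by
        rw [rpow_half_eq hu.le]
        field_simp
        ring

lemma abs_FF2_le {σ x t : ℝ} (hx : x ≤ σ) (hσ : σ < 1) (ht : t ∈ Set.Ioo (0:ℝ) 1) :
    ‖FF2 x t‖ ≤
      (3 / (4 * ((1 - σ)/4)^2 * Real.sqrt ((1 - σ)/4))) * (1 - t) ^ (-(1/2) : ℝ) := by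
  set c : ℝ := (1 - σ)/4 with hc
  have hcpos : 0 < c := by simp only [hc]; linarith
  have hu : 0 < 1 - t := by linarith [ht.2]
  have hg : c * (1 - t) ≤ gg x t := by
    have := gg_lb hx hσ.le ht.1.le ht.2.le
    calc c * (1 - t) = (1 - σ) * (1 - t) / 4 := by rw [hc]; ring
    _ ≤ gg x t := this
  have hcu : 0 < c * (1 - t) := mul_pos hcpos hu
  have hgpos : 0 < gg x t := lt_of_lt_of_le hcu hg
  have hsqle : Real.sqrt c * Real.sqrt (1 - t) ≤ Real.sqrt (gg x t) := by
    rw [← Real.sqrt_mul hcpos.le]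
    exact Real.sqrt_le_sqrt hg
  have hsc : 0 < Real.sqrt c := Real.sqrt_pos.2 hcpos
  have hsu : 0 < Real.sqrt (1 - t) := Real.sqrt_pos.2 hu
  have hsg : 0 < Real.sqrt (gg x t) := Real.sqrt_pos.2 hgpos
  have hnum : 1 - t^4 ≤ 4 * (1 - t) := by nlinarith [ht.1, ht.2, sq_nonneg t, sq_nonneg (1 - t)]
  have ht2 : t^2 ≤ 1 := by nlinarith [ht.1, ht.2]
  have hnum0 : 0 ≤ 1 - t^4 := by nlinarith [ht2, sq_nonneg t]
  have hnum2 : 3 * (1 - t^4)^2 ≤ 48 * (1 - t)^2 := by nlinarith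
  have hFnn : 0 ≤ FF2 x t := by rw [FF2]; positivity
  rw [Real.norm_eq_abs, abs_of_nonneg hFnn, FF2]
  have hg2 : (c * (1 - t))^2 ≤ (gg x t)^2 := by nlinarith
  have hden : 64 * (Real.sqrt c * Real.sqrt (1 - t)) * (c * (1 - t))^2
      ≤ 64 * Real.sqrt (gg x t) * (gg x t)^2 := by
    have h1 : 64 * (Real.sqrt c * Real.sqrt (1 - t)) ≤ 64 * Real.sqrt (gg x t) := by linarith
    exact mul_le_mul h1 hg2 (by positivity) (by positivity)
  have hdpos : 0 < 64 * (Real.sqrt c * Real.sqrt (1 - t)) * (c * (1 - t))^2 := by positivity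
  calc 3 * (1 - t^4)^2 / (64 * Real.sqrt (gg x t) * (gg x t)^2)
      ≤ (48 * (1 - t)^2) / (64 * (Real.sqrt c * Real.sqrt (1 - t)) * (c * (1 - t))^2) :=
        div_le_div₀ (by positivity) hnum2 hdpos hden
    _ = (3 / (4 * c^2 * Real.sqrt c)) * (1 - t) ^ (-(1/2) : ℝ) := by
        rw [rpow_half_eq hu.le]
        field_simp
        ring

lemma gg_cont (x : ℝ) : Continuous fun t => gg x t := by
  unfold gg; continuity

lemma meas_F (x : ℝ) :
    AEStronglyMeasurable (fun t => 1 / Real.sqrt (gg x t))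
      (volume.restrict (Ι (0:ℝ) 1)) := by
  exact (Measurable.div measurable_const
    ((Real.continuous_sqrt.comp (gg_cont x)).measurable)).aestronglyMeasurable

lemma meas_FF1 (x : ℝ) :
    AEStronglyMeasurable (FF1 x) (volume.restrict (Ι (0:ℝ) 1)) := by
  apply Measurable.aestronglyMeasurable
  apply Measurable.div
  · exact (by continuity : Continuous fun t : ℝ => 1 - t^4).measurable
  · exact ((continuous_const.mul (Real.continuous_sqrt.comp (gg_cont x))).mul
      (gg_cont x)).measurable

lemma meas_FF2 (x : ℝ) :
    AEStronglyMeasurable (FF2 x) (volume.restrict (Ι (0:ℝ) 1)) := by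
  apply Measurable.aestronglyMeasurable
  apply Measurable.div
  · exact (by continuity : Continuous fun t : ℝ => 3 * (1 - t^4)^2).measurable
  · exact ((continuous_const.mul (Real.continuous_sqrt.comp (gg_cont x))).mul
      ((gg_cont x).pow 2)).measurable

lemma ae_Ioo : ∀ᵐ t : ℝ ∂volume, t ∈ Ι (0:ℝ) 1 → t ∈ Set.Ioo (0:ℝ) 1 := by
  have h1 : (volume : Measure ℝ) {(1:ℝ)} = 0 := Real.volume_singleton
  filter_upwards [MeasureTheory.compl_mem_ae_iff.2 h1] with t ht hmem
  rw [Set.uIoc_of_le zero_le_one] at hmem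
  exact ⟨hmem.1, lt_of_le_of_ne hmem.2 (by simpa using ht)⟩

lemma key1 {s₀ : ℝ} (hs₀ : s₀ ∈ Set.Ioo (0:ℝ) 1) :
    IntervalIntegrable (FF1 s₀) volume 0 1 ∧
      HasDerivAt Ihat (∫ t in (0:ℝ)..1, FF1 s₀ t) s₀ := by
  set σ : ℝ := (1 + s₀)/2 with hσdef
  have hσ1 : σ < 1 := by rw [hσdef]; linarith [hs₀.2]
  have hs₀σ : s₀ ≤ σ := by rw [hσdef]; linarith [hs₀.1]
  set ε : ℝ := (1 - s₀)/2 with hεdef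
  have hε : 0 < ε := by rw [hεdef]; linarith [hs₀.2]
  have hball : ∀ x ∈ Metric.ball s₀ ε, x ≤ σ := by
    intro x hx
    rw [Real.ball_eq_Ioo] at hx
    rw [hσdef]; rw [hεdef] at hx
    linarith [hx.2]
  have H := intervalIntegral.hasDerivAt_integral_of_dominated_loc_of_deriv_le
    (F := fun x t => 1 / Real.sqrt (gg x t)) (F' := FF1) (x₀ := s₀)
    (a := (0:ℝ)) (b := 1) (μ := volume)
    (bound := fun t => (1 / (2 * ((1 - σ)/4) * Real.sqrt ((1 - σ)/4))) *
      (1 - t) ^ (-(1/2) : ℝ))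
    (Metric.ball_mem_nhds s₀ hε)
    (Filter.Eventually.of_forall fun x => meas_F x)
    ?_ (meas_FF1 s₀) ?_ (bound_int _) ?_
  · refine ⟨H.1, ?_⟩
    have hIhat : Ihat = fun x => ∫ t in (0:ℝ)..1, 1 / Real.sqrt (gg x t) := rfl
    rw [hIhat]
    exact H.2
  · -- integrability of F s₀
    apply (bound_int ((Real.sqrt ((1 - σ)/4))⁻¹)).mono_fun' (meas_F s₀)
    rw [Filter.EventuallyLE, MeasureTheory.ae_restrict_iff' measurableSet_uIoc]
    filter_upwards [ae_Ioo] with t ht hmem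
    exact abs_F_le hs₀σ hσ1 (ht hmem)
  · filter_upwards [ae_Ioo] with t ht hmem x hx
    exact abs_FF1_le (hball x hx) hσ1 (ht hmem)
  · filter_upwards [ae_Ioo] with t ht hmem x hx
    have hgpos : 0 < gg x t := gg_pos (hball x hx) hσ1 (ht hmem).1.le (ht hmem).2
    exact F_hasDeriv t x hgpos

lemma key2 {s₀ : ℝ} (hs₀ : s₀ ∈ Set.Ioo (0:ℝ) 1) :
    IntervalIntegrable (FF2 s₀) volume 0 1 ∧
      HasDerivAt (fun x => ∫ t in (0:ℝ)..1, FF1 x t)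
        (∫ t in (0:ℝ)..1, FF2 s₀ t) s₀ := by
  set σ : ℝ := (1 + s₀)/2 with hσdef
  have hσ1 : σ < 1 := by rw [hσdef]; linarith [hs₀.2]
  have hs₀σ : s₀ ≤ σ := by rw [hσdef]; linarith [hs₀.1]
  set ε : ℝ := (1 - s₀)/2 with hεdef
  have hε : 0 < ε := by rw [hεdef]; linarith [hs₀.2]
  have hball : ∀ x ∈ Metric.ball s₀ ε, x ≤ σ := by
    intro x hx
    rw [Real.ball_eq_Ioo] at hx
    rw [hσdef]; rw [hεdef] at hx
    linarith [hx.2]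
  have H := intervalIntegral.hasDerivAt_integral_of_dominated_loc_of_deriv_le
    (F := fun x t => FF1 x t) (F' := FF2) (x₀ := s₀)
    (a := (0:ℝ)) (b := 1) (μ := volume)
    (bound := fun t => (3 / (4 * ((1 - σ)/4)^2 * Real.sqrt ((1 - σ)/4))) *
      (1 - t) ^ (-(1/2) : ℝ))
    (Metric.ball_mem_nhds s₀ hε)
    (Filter.Eventually.of_forall fun x => meas_FF1 x)
    (key1 hs₀).1 (meas_FF2 s₀) ?_ (bound_int _) ?_
  · exact ⟨H.1, H.2⟩
  · filter_upwards [ae_Ioo] with t ht hmem x hx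
    exact abs_FF2_le (hball x hx) hσ1 (ht hmem)
  · filter_upwards [ae_Ioo] with t ht hmem x hx
    have hgpos : 0 < gg x t := gg_pos (hball x hx) hσ1 (ht hmem).1.le (ht hmem).2
    exact FF1_hasDeriv t x hgpos

lemma FF1_pos {s t : ℝ} (hs : s ∈ Set.Ioo (0:ℝ) 1) (ht : t ∈ Set.Ioo (0:ℝ) 1) :
    0 < FF1 s t := by
  have hg : 0 < gg s t := gg_pos le_rfl hs.2 ht.1.le ht.2
  have ht2 : t^2 ≤ 1 := by nlinarith [ht.1, ht.2]
  have hnum : 0 < 1 - t^4 := by nlinarith [ht2, sq_nonneg t, ht.2, ht.1]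
  rw [FF1]
  have := Real.sqrt_pos.2 hg
  positivity

lemma FF2_pos {s t : ℝ} (hs : s ∈ Set.Ioo (0:ℝ) 1) (ht : t ∈ Set.Ioo (0:ℝ) 1) :
    0 < FF2 s t := by
  have hg : 0 < gg s t := gg_pos le_rfl hs.2 ht.1.le ht.2
  have ht2 : t^2 ≤ 1 := by nlinarith [ht.1, ht.2]
  have hnum : 0 < 1 - t^4 := by nlinarith [ht2, sq_nonneg t, ht.2, ht.1]
  rw [FF2]
  have := Real.sqrt_pos.2 hg
  positivity

theorem stmt_4 (s : ℝ) (hs : s ∈ Set.Ioo (0:ℝ) 1) :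
    0 < deriv Ihat s ∧ 0 < deriv (deriv Ihat) s := by
  obtain ⟨hint1, h1⟩ := key1 hs
  obtain ⟨hint2, h2⟩ := key2 hs
  have hd1 : deriv Ihat s = ∫ t in (0:ℝ)..1, FF1 s t := h1.deriv
  have hev : deriv Ihat =ᶠ[nhds s] fun x => ∫ t in (0:ℝ)..1, FF1 x t := by
    filter_upwards [Ioo_mem_nhds hs.1 hs.2] with x hx
    exact (key1 hx).2.deriv
  have hd2 : deriv (deriv Ihat) s = ∫ t in (0:ℝ)..1, FF2 s t := by
    rw [hev.deriv_eq]
    exact h2.deriv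
  constructor
  · rw [hd1]
    exact intervalIntegral_pos_of_pos_on hint1 (fun t ht => FF1_pos hs ht) one_pos
  · rw [hd2]
    exact intervalIntegral_pos_of_pos_on hint2 (fun t ht => FF2_pos hs ht) one_pos
end

section
/- Let G(u) = u³/3 - u⁴/4 and fix μ > 0, k > 0. Suppose m : (0, x_p) → (0,1) satisfies 0 < m(x) < x and k²x⁴ - 2μG(x) = -2μG(m(x)) for all x. Then lim_{x→0⁺} m(x)/x = 1 and lim_{x→0⁺} (m(x) - x)/x² = -k²/(2μ). -/
open Filter Set

theorem stmt_7 (G : ℝ → ℝ) (hG : ∀ u, G u = u^3/3 - u^4/4)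
    (μ k xp : ℝ) (hμ : 0 < μ) (hk : 0 < k) (hxp : 0 < xp)
    (m : ℝ → ℝ)
    (hm : ∀ x ∈ Set.Ioo 0 xp, 0 < m x ∧ m x < x ∧ m x < 1 ∧
      k^2 * x^4 - 2*μ*G x = -(2*μ*G (m x))) :
    Filter.Tendsto (fun x => m x / x) (nhdsWithin 0 (Set.Ioo 0 xp)) (nhds 1) ∧
      Filter.Tendsto (fun x => (m x - x) / x^2) (nhdsWithin 0 (Set.Ioo 0 xp))
        (nhds (-(k^2 / (2*μ)))) := by
  have hμ' : (μ:ℝ) ≠ 0 := ne_of_gt hμ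
  set l := nhdsWithin (0:ℝ) (Set.Ioo 0 xp) with hl
  have hmem : ∀ᶠ x in l, x ∈ Set.Ioo 0 xp := eventually_mem_nhdsWithin
  have hxt : Filter.Tendsto (fun x : ℝ => x) l (nhds 0) :=
    Filter.tendsto_id.mono_right nhdsWithin_le_nhds
  have hmt : Filter.Tendsto m l (nhds 0) := by
    apply tendsto_of_tendsto_of_tendsto_of_le_of_le' tendsto_const_nhds hxt
    · exact hmem.mono fun x hx => (hm x hx).1.le
    · exact hmem.mono fun x hx => (hm x hx).2.1.le
  -- cube of ratio
  have hr3 : ∀ᶠ x in l, (m x / x)^3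
      = (1 - 3*x/4 - 3*k^2*x/(2*μ)) / (1 - 3*(m x)/4) := by
    filter_upwards [hmem] with x hx
    obtain ⟨h1, h2, h3, heq⟩ := hm x hx
    have hx0 : x ≠ 0 := ne_of_gt hx.1
    have hd : (1 - 3*(m x)/4) ≠ 0 := by nlinarith
    rw [hG, hG] at heq
    have hinv : μ * μ⁻¹ = 1 := mul_inv_cancel₀ hμ'
    rw [div_pow, div_eq_div_iff (by positivity) hd]
    linear_combination (3/(2*μ))*heq + (x^3 - 3/4*x^4 - (m x)^3 + 3/4*(m x)^4) * hinv
  have hnum : Filter.Tendsto (fun x : ℝ => 1 - 3*x/4 - 3*k^2*x/(2*μ)) l (nhds 1) := by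
    have hc : Continuous fun x : ℝ => 1 - 3*x/4 - 3*k^2*x/(2*μ) := by continuity
    exact (hc.tendsto' 0 1 (by ring)).mono_left nhdsWithin_le_nhds
  have hden : Filter.Tendsto (fun x : ℝ => 1 - 3*(m x)/4) l (nhds 1) := by
    have h2 : Filter.Tendsto (fun x : ℝ => 1 - 3 * m x / 4) l (nhds (1 - 3*0/4)) :=
      (tendsto_const_nhds (x := (1:ℝ))).sub ((hmt.const_mul (3:ℝ)).div_const 4)
    simpa using h2
  have hr3t : Filter.Tendsto (fun x => (m x / x)^3) l (nhds 1) := by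
    have hq := hnum.div hden one_ne_zero
    simp only [div_one] at hq
    exact hq.congr' (hr3.mono fun x h => h.symm)
  have hrt : Filter.Tendsto (fun x => m x / x) l (nhds 1) := by
    apply tendsto_of_tendsto_of_tendsto_of_le_of_le' hr3t tendsto_const_nhds
    · filter_upwards [hmem] with x hx
      obtain ⟨h1, h2, _, _⟩ := hm x hx
      have hr0 : 0 < m x / x := div_pos h1 (lt_trans h1 h2)
      have hr1 : m x / x ≤ 1 := (div_le_one (lt_trans h1 h2)).2 h2.le
      nlinarith [mul_nonneg hr0.le (mul_nonneg hr0.le hr0.le)]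
    · filter_upwards [hmem] with x hx
      obtain ⟨h1, h2, _, _⟩ := hm x hx
      exact (div_le_one (lt_trans h1 h2)).2 h2.le
  refine ⟨hrt, ?_⟩
  set E : ℝ → ℝ := fun x => 2*μ/3*((m x/x)^2 + m x/x + 1)
      - μ/2*x*((m x/x)^3 + (m x/x)^2 + m x/x + 1) with hE
  have hEt : Filter.Tendsto E l (nhds (2*μ)) := by
    have h2μ : (2*μ:ℝ) = 2*μ/3*((1:ℝ)^2 + 1 + 1) - μ/2*0*((1:ℝ)^3 + 1^2 + 1 + 1) := by ring
    rw [h2μ]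
    exact ((((hrt.pow 2).add hrt).add tendsto_const_nhds).const_mul _).sub
      ((hxt.const_mul _).mul ((((hrt.pow 3).add (hrt.pow 2)).add hrt).add tendsto_const_nhds))
  have hEne : ∀ᶠ x in l, E x ≠ 0 := hEt.eventually_ne (by positivity)
  have heq2 : ∀ᶠ x in l, (m x - x) / x^2 = -k^2 / E x := by
    filter_upwards [hmem, hEne] with x hx hEx
    obtain ⟨h1, h2, h3, heq⟩ := hm x hx
    have hx0 : x ≠ 0 := ne_of_gt hx.1
    rw [hG, hG] at heq
    have hQ : E x * x^2 = (2*μ/3)*((m x)^2 + m x * x + x^2)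
        - (μ/2)*((m x)^3 + (m x)^2*x + m x * x^2 + x^3) := by
      rw [hE]
      field_simp
    rw [div_eq_div_iff (by positivity) hEx]
    apply mul_right_cancel₀ (pow_ne_zero 2 hx0)
    rw [mul_assoc, hQ]
    linear_combination heq
  have h2μne : (2*μ:ℝ) ≠ 0 := by positivity
  have hfin : Filter.Tendsto (fun x => -k^2 / E x) l (nhds (-(k^2/(2*μ)))) := by
    have hv : (-(k^2/(2*μ)):ℝ) = -k^2 / (2*μ) := by rw [neg_div]
    rw [hv]
    exact Filter.Tendsto.div tendsto_const_nhds hEt h2μne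
  exact hfin.congr' (heq2.mono fun x h => h.symm)
end

section
/- Let G(u) = u³/3 - u⁴/4, fix μ > 0, k > 0, and let m : (x_l, 1) → (0,1) satisfy 0 < m(x) < x and k²(1-x)² - 2μG(x) = -2μG(m(x)). Then lim_{x→1⁻} (1 - m(x))/(1 - x) = √(1 + k²/μ). -/
set_option maxHeartbeats 1000000


theorem stmt_8 (G : ℝ → ℝ) (hG : ∀ u, G u = u^3/3 - u^4/4)
    (μ k xl : ℝ) (hμ : 0 < μ) (hk : 0 < k) (hxl : xl < 1)
    (m : ℝ → ℝ)
    (hm : ∀ x ∈ Set.Ioo xl 1, 0 < m x ∧ m x < x ∧ m x < 1 ∧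
      k^2 * (1 - x)^2 - 2*μ*G x = -(2*μ*G (m x))) :
    Filter.Tendsto (fun x => (1 - m x) / (1 - x)) (nhdsWithin 1 (Set.Ioo xl 1))
      (nhds (Real.sqrt (1 + k^2/μ))) := by
  set L := nhdsWithin (1:ℝ) (Set.Ioo xl 1) with hLdef
  have hε : Filter.Tendsto (fun x : ℝ => 1 - x) L (nhds 0) := by
    have h1 : Filter.Tendsto (fun x : ℝ => 1 - x) (nhds 1) (nhds (1 - 1)) :=
      (continuous_const.sub continuous_id).tendsto 1
    simpa using h1.mono_left nhdsWithin_le_nhds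
  -- key identity
  have key : ∀ x ∈ Set.Ioo xl 1,
      (1 - m x)^2 * (μ * (1 - (4/3)*(1 - m x) + (1 - m x)^2/2))
        = (1 - x)^2 * (μ + k^2 - (4/3)*μ*(1-x) + μ*(1-x)^2/2) := by
    intro x hx
    have h := (hm x hx).2.2.2
    rw [hG x, hG (m x)] at h
    linear_combination -h
  -- denominator lower bound
  have hden_lb : ∀ t : ℝ, μ/9 ≤ μ * (1 - (4/3)*t + t^2/2) := by
    intro t
    nlinarith [mul_nonneg hμ.le (sq_nonneg (t - 4/3))]
  -- bound on δ²
  have hC : (0:ℝ) < 9*(μ + k^2 + μ*(1-xl)^2/2)/μ := by positivity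
  set C : ℝ := 9*(μ + k^2 + μ*(1-xl)^2/2)/μ with hCdef
  have hδsq : ∀ x ∈ Set.Ioo xl 1, (1 - m x)^2 ≤ C * (1 - x)^2 := by
    intro x hx
    have hkey := key x hx
    have h1 : xl < x := hx.1
    have h2 : x < 1 := hx.2
    have hlb := hden_lb (1 - m x)
    have hεpos : 0 < 1 - x := by linarith
    have hεlt : 1 - x ≤ 1 - xl := by linarith
    have hnumub : (1 - x)^2 * (μ + k^2 - (4/3)*μ*(1-x) + μ*(1-x)^2/2)
        ≤ (1 - x)^2 * (μ + k^2 + μ*(1-xl)^2/2) := by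
      apply mul_le_mul_of_nonneg_left _ (sq_nonneg _)
      have : μ*(1-x)^2/2 ≤ μ*(1-xl)^2/2 := by
        have := mul_le_mul_of_nonneg_left (pow_le_pow_left₀ hεpos.le hεlt 2) hμ.le
        linarith
      nlinarith [mul_pos hμ hεpos]
    have hmul : (1 - m x)^2 * (μ/9) ≤ (1 - m x)^2 * (μ * (1 - (4/3)*(1 - m x) + (1 - m x)^2/2)) :=
      mul_le_mul_of_nonneg_left hlb (sq_nonneg _)
    have hfin : (1 - m x)^2 * (μ/9) ≤ (1 - x)^2 * (μ + k^2 + μ*(1-xl)^2/2) := by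
      calc (1 - m x)^2 * (μ/9) ≤ _ := hmul
        _ = (1 - x)^2 * (μ + k^2 - (4/3)*μ*(1-x) + μ*(1-x)^2/2) := hkey
        _ ≤ _ := hnumub
    rw [hCdef]
    rw [div_mul_eq_mul_div, le_div_iff₀ hμ]
    nlinarith [hfin]
  -- δ → 0
  have hδ0 : Filter.Tendsto (fun x => 1 - m x) L (nhds 0) := by
    have hg : Filter.Tendsto (fun x : ℝ => Real.sqrt C * (1 - x)) L (nhds 0) := by
      simpa using hε.const_mul (Real.sqrt C)
    apply squeeze_zero' ?_ ?_ hg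
    · filter_upwards [self_mem_nhdsWithin] with x hx
      have := (hm x hx).2.2.1
      linarith
    · filter_upwards [self_mem_nhdsWithin] with x hx
      have hx2 := hx
      have hδnn : 0 ≤ 1 - m x := by have := (hm x hx).2.2.1; linarith
      have hεnn : 0 ≤ 1 - x := by have := hx.2; linarith
      have : (1 - m x) = Real.sqrt ((1 - m x)^2) := (Real.sqrt_sq hδnn).symm
      rw [this]
      calc Real.sqrt ((1 - m x)^2) ≤ Real.sqrt (C * (1 - x)^2) :=
            Real.sqrt_le_sqrt (hδsq x hx)
        _ = Real.sqrt C * (1 - x) := by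
            rw [Real.sqrt_mul hC.le, Real.sqrt_sq hεnn]
  -- denominator tendsto μ
  have hden_t : Filter.Tendsto (fun x => μ * (1 - (4/3)*(1 - m x) + (1 - m x)^2/2)) L (nhds μ) := by
    have : Filter.Tendsto (fun x => μ * (1 - (4/3)*(1 - m x) + (1 - m x)^2/2)) L
        (nhds (μ * (1 - (4/3)*0 + 0^2/2))) :=
      tendsto_const_nhds.mul (((tendsto_const_nhds.sub (hδ0.const_mul _)).add
        ((hδ0.pow 2).div_const 2)))
    simpa using this
  -- numerator tendsto μ + k²
  have hnum_t : Filter.Tendsto (fun x => μ + k^2 - (4/3)*μ*(1-x) + μ*(1-x)^2/2) L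
      (nhds (μ + k^2)) := by
    have hc : Continuous (fun x : ℝ => μ + k^2 - (4/3)*μ*(1-x) + μ*(1-x)^2/2) := by
      continuity
    have h2 := (hc.tendsto 1).mono_left (nhdsWithin_le_nhds (s := Set.Ioo xl 1))
    simpa using h2
  -- ratio squared tendsto (μ + k²)/μ
  have hr2 : Filter.Tendsto (fun x => ((1 - m x)/(1 - x))^2) L (nhds ((μ + k^2)/μ)) := by
    apply Filter.Tendsto.congr' _ (hnum_t.div hden_t hμ.ne')
    filter_upwards [self_mem_nhdsWithin] with x hx
    have hεpos : 0 < 1 - x := by have := hx.2; linarith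
    have hdenpos : 0 < μ * (1 - (4/3)*(1 - m x) + (1 - m x)^2/2) :=
      lt_of_lt_of_le (by positivity) (hden_lb _)
    simp only [Pi.div_apply]
    rw [div_pow, eq_comm, div_eq_div_iff (by positivity) hdenpos.ne']
    linarith [key x hx]
  -- take square roots
  have hfinal : Filter.Tendsto (fun x => Real.sqrt (((1 - m x)/(1 - x))^2)) L
      (nhds (Real.sqrt ((μ + k^2)/μ))) :=
    (Real.continuous_sqrt.tendsto _).comp hr2
  have heq : Real.sqrt ((μ + k^2)/μ) = Real.sqrt (1 + k^2/μ) := by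
    congr 1; field_simp
  rw [heq] at hfinal
  apply hfinal.congr'
  filter_upwards [self_mem_nhdsWithin] with x hx
  have hεpos : 0 < 1 - x := by have := hx.2; linarith
  have hδnn : 0 ≤ 1 - m x := by have := (hm x hx).2.2.1; linarith
  exact Real.sqrt_sq (by positivity)
end

section
/- For every m ∈ (0,1), the cubic x ↦ -4m² + 3m³ - mx + m²x - x² + mx² + x³ has exactly one real root, and that root is greater than 1; in particular this cubic is negative for all x ∈ (0,1). -/
theorem stmt_13 (m : ℝ) (hm : m ∈ Set.Ioo (0:ℝ) 1) :
    (∃! x : ℝ, -4*m^2 + 3*m^3 - m*x + m^2*x - x^2 + m*x^2 + x^3 = 0) ∧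
      (∀ x : ℝ, -4*m^2 + 3*m^3 - m*x + m^2*x - x^2 + m*x^2 + x^3 = 0 → 1 < x) ∧
      (∀ x ∈ Set.Ioo (0:ℝ) 1, -4*m^2 + 3*m^3 - m*x + m^2*x - x^2 + m*x^2 + x^3 < 0) := by
  obtain ⟨h0, h1⟩ := hm
  set g : ℝ → ℝ := fun x => -4*m^2 + 3*m^3 - m*x + m^2*x - x^2 + m*x^2 + x^3 with hg
  have hneg : ∀ x : ℝ, x ≤ 1 → g x < 0 := by
    intro x hx
    simp only [hg]
    nlinarith [sq_nonneg (x - 1), sq_nonneg (x + m/2), sq_nonneg (x - m), sq_nonneg x,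
      sq_nonneg m, mul_pos h0 h0, sq_nonneg (x+1), mul_nonneg (sub_nonneg.2 hx) h0.le,
      sq_nonneg (2*x+m)]
  have hroot_gt : ∀ x : ℝ, g x = 0 → 1 < x := by
    intro x hx
    by_contra h
    exact absurd hx (ne_of_lt (hneg x (not_lt.1 h)))
  have hderiv : ∀ x : ℝ, HasDerivAt g (-m + m^2 - 2*x + m*(2*x) + 3*x^2) x := by
    intro x
    have h := (((((((hasDerivAt_const x (-4*m^2)).add (hasDerivAt_const x (3*m^3))).sub
      ((hasDerivAt_id x).const_mul m)).add ((hasDerivAt_id x).const_mul (m^2))).sub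
      (hasDerivAt_pow 2 x)).add ((hasDerivAt_pow 2 x).const_mul m)).add (hasDerivAt_pow 3 x))
    simp only [id] at h
    exact h.congr_deriv (by push_cast; ring_nf)
  have hcont : Continuous g := by
    simp only [hg]; continuity
  have hmono : StrictMonoOn g (Set.Ici (1:ℝ)) := by
    apply strictMonoOn_of_deriv_pos (convex_Ici 1) hcont.continuousOn
    intro x hx
    rw [interior_Ici] at hx
    rw [(hderiv x).deriv]
    nlinarith [sq_nonneg (x - 1), (Set.mem_Ioi.1 hx).le]
  have h5 : 0 < g 5 := by simp only [hg]; nlinarith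
  have h1' : g 1 < 0 := hneg 1 le_rfl
  obtain ⟨x₀, hx₀mem, hx₀⟩ : ∃ x ∈ Set.Ioo (1:ℝ) 5, g x = 0 := by
    have := intermediate_value_Ioo (by norm_num : (1:ℝ) ≤ 5) hcont.continuousOn
    obtain ⟨x, hx, hgx⟩ := this ⟨h1', h5⟩
    exact ⟨x, hx, hgx⟩
  refine ⟨⟨x₀, hx₀, ?_⟩, hroot_gt, fun x hx => hneg x hx.2.le⟩
  intro y hy
  exact hmono.injOn (Set.mem_Ici.2 (hroot_gt y hy).le)
    (Set.mem_Ici.2 hx₀mem.1.le) (hy.trans hx₀.symm)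
end
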